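/- In the block construction above, if f has influence at most s in every coordinate (i.e., Pr_{w}[f(w) ≠ f(w ⊕ e_j)] ≤ s for every j ∈ [n']), then every vector φ in the span W of {f_z : z ∈ {0,1}^B} satisfies 2^{n−1}·I(φ) ≤ 2s·⟨φ,φ⟩, where I(φ) = max_{i∈[n]} E_{x∈{0,1}^n}|φ(x) − φ(x ⊕ e_i)|². -/

import Mathlib

open scoped BigOperators
open Complex

/-- Strings of length `n = 2Bn'`, viewed as `2B` blocks of length `n'`, indexed by
`(k,b)` with `k : Fin B`, `b : Bool`. -/
abbrev Blk (B n' : ℕ) := Fin B → Bool → (Fin n' → Bool)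

/-- Hermitian inner product on functions `{0,1}^n → ℂ` in the block encoding. -/
noncomputable def ipB {B n' : ℕ} (h g : Blk B n' → ℂ) : ℂ :=
  ∑ x : Blk B n', (starRingEnd ℂ) (h x) * g x

/-- The codeword `f_z(x) = ∏_k f(x_{k,z_k})`. -/
noncomputable def fz {B n' : ℕ} (f : (Fin n' → Bool) → ℂ) (z : Fin B → Bool)
    (x : Blk B n') : ℂ :=
  ∏ k : Fin B, f (x k (z k))

/-- Flip the `j`-th bit of a length-`n'` string. -/
def wflip {n' : ℕ} (j : Fin n') (w : Fin n' → Bool) : Fin n' → Bool :=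
  Function.update w j (!w j)

/-- Flip the bit at position `j` of block `(k,b)`. -/
def blkflip {B n' : ℕ} (k : Fin B) (b : Bool) (j : Fin n') (x : Blk B n') : Blk B n' :=
  Function.update x k (Function.update (x k) b (wflip j (x k b)))

/-- Influence of coordinate `(k,b,j)` on `φ : {0,1}^n → ℂ`, `n = 2Bn'`. -/
noncomputable def inflB {B n' : ℕ} (k : Fin B) (b : Bool) (j : Fin n')
    (φ : Blk B n' → ℂ) : ℝ :=
  (∑ x : Blk B n', ‖φ x - φ (blkflip k b j x)‖ ^ 2) / 2 ^ (2 * B * n')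


def insKB {B n' : ℕ} (k : Fin B) (b : Bool) (x : Blk B n') (w : Fin n' → Bool) : Blk B n' :=
  Function.update x k (Function.update (x k) b w)

lemma insKB_kb {B n' : ℕ} (k : Fin B) (b : Bool) (x : Blk B n') (w : Fin n' → Bool) :
    insKB k b x w k b = w := by simp [insKB]

lemma insKB_self {B n' : ℕ} (k : Fin B) (b : Bool) (x : Blk B n') :
    insKB k b x (x k b) = x := by simp [insKB]

lemma insKB_ne_k {B n' : ℕ} (k : Fin B) (b : Bool) (x : Blk B n') (w : Fin n' → Bool)
    {k' : Fin B} (h : k' ≠ k) : insKB k b x w k' = x k' :=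
  Function.update_of_ne h _ _

lemma insKB_ne_b {B n' : ℕ} (k : Fin B) (b : Bool) (x : Blk B n') (w : Fin n' → Bool)
    {b' : Bool} (h : b' ≠ b) : insKB k b x w k b' = x k b' := by
  simp [insKB, Function.update_of_ne h]

lemma blkflip_eq_insKB {B n' : ℕ} (k : Fin B) (b : Bool) (j : Fin n') (x : Blk B n') :
    blkflip k b j x = insKB k b x (wflip j (x k b)) := rfl

lemma decomp {B n' : ℕ} (f : (Fin n' → Bool) → ℂ) (k : Fin B) (b : Bool)
    (φ : Blk B n' → ℂ) (hφ : φ ∈ Submodule.span ℂ (Set.range (fz f))) :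
    ∃ A C : Blk B n' → ℂ,
      (∀ x w, A (insKB k b x w) = A x) ∧ (∀ x w, C (insKB k b x w) = C x) ∧
      ∀ x, φ x = A x + f (x k b) * C x := by
  induction hφ using Submodule.span_induction with
  | mem g hg =>
    obtain ⟨z, rfl⟩ := hg
    by_cases hz : z k = b
    · refine ⟨0, fun x => ∏ k' ∈ Finset.univ.erase k, f (x k' (z k')), by simp, ?_, ?_⟩
      · intro x w
        refine Finset.prod_congr rfl fun k' hk' => ?_
        rw [insKB_ne_k k b x w (Finset.ne_of_mem_erase hk')]
      · intro x
        simp only [Pi.zero_apply, zero_add, fz, ← hz]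
        exact (Finset.mul_prod_erase Finset.univ (fun k' => f (x k' (z k')))
          (Finset.mem_univ k)).symm
    · refine ⟨fz f z, 0, ?_, by simp, by simp⟩
      intro x w
      unfold fz
      refine Finset.prod_congr rfl fun k' _ => ?_
      by_cases hk : k' = k
      · rw [hk, show insKB k b x w k (z k) = x k (z k) from insKB_ne_b k b x w hz]
      · rw [insKB_ne_k k b x w hk]
  | zero => exact ⟨0, 0, by simp, by simp, by simp⟩
  | add u v _ _ hu hv =>
    obtain ⟨A1, C1, hA1, hC1, h1⟩ := hu
    obtain ⟨A2, C2, hA2, hC2, h2⟩ := hv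
    exact ⟨A1 + A2, C1 + C2, fun x w => by simp [hA1, hA2],
      fun x w => by simp [hC1, hC2], fun x => by simp [h1 x, h2 x]; ring⟩
  | smul c u _ hu =>
    obtain ⟨A, C, hA, hC, h⟩ := hu
    exact ⟨c • A, c • C, fun x w => by simp [hA], fun x w => by simp [hC],
      fun x => by simp [h x]; ring⟩

noncomputable def eKB {B n' : ℕ} (k : Fin B) (b : Bool) :
    Blk B n' ≃ ((Fin n' → Bool) × ({p : Fin B × Bool // p ≠ (k, b)} → (Fin n' → Bool))) :=
  (Equiv.curry (Fin B) Bool (Fin n' → Bool)).symm.trans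
    (Equiv.funSplitAt (k, b) (Fin n' → Bool))

lemma eKB_symm_apply {B n' : ℕ} (k : Fin B) (b : Bool) (w : Fin n' → Bool)
    (r : {p : Fin B × Bool // p ≠ (k, b)} → (Fin n' → Bool)) (k' : Fin B) (b' : Bool) :
    (eKB k b).symm (w, r) k' b' = if h : (k', b') = (k, b) then w else r ⟨(k', b'), h⟩ := by
  simp only [eKB, Equiv.symm_trans_apply, Equiv.symm_symm, Equiv.curry_apply,
    Function.curry, Equiv.funSplitAt_symm_apply]

lemma eKB_kb {B n' : ℕ} (k : Fin B) (b : Bool) (w : Fin n' → Bool)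
    (r : {p : Fin B × Bool // p ≠ (k, b)} → (Fin n' → Bool)) :
    (eKB k b).symm (w, r) k b = w := by
  rw [eKB_symm_apply]; simp

lemma eKB_ins {B n' : ℕ} (k : Fin B) (b : Bool) (w w' : Fin n' → Bool)
    (r : {p : Fin B × Bool // p ≠ (k, b)} → (Fin n' → Bool)) :
    insKB k b ((eKB k b).symm (w, r)) w' = (eKB k b).symm (w', r) := by
  funext k' b'
  by_cases hk : k' = k
  · by_cases hb : b' = b
    · rw [hk, hb, insKB_kb, eKB_kb]
    · rw [hk, insKB_ne_b k b _ w' hb, eKB_symm_apply, eKB_symm_apply]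
      simp [hb]
  · rw [show insKB k b ((eKB k b).symm (w, r)) w' k' b'
        = (eKB k b).symm (w, r) k' b' from congrFun (insKB_ne_k k b _ w' hk) b',
      eKB_symm_apply, eKB_symm_apply]
    simp [hk]


lemma fconj {n' : ℕ} (f : (Fin n' → Bool) → ℂ)
    (hval : ∀ w, f w = 1 / 2 ∨ f w = -(1 / 2)) (w : Fin n' → Bool) :
    (starRingEnd ℂ) (f w) = f w := by
  rcases hval w with h | h <;> rw [Complex.conj_eq_iff_im, h] <;> norm_num

lemma fnormSq {n' : ℕ} (f : (Fin n' → Bool) → ℂ)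
    (hval : ∀ w, f w = 1 / 2 ∨ f w = -(1 / 2)) (w : Fin n' → Bool) :
    Complex.normSq (f w) = 1 / 4 := by
  rcases hval w with h | h <;> rw [h] <;> simp [Complex.normSq_apply] <;> norm_num

lemma fsum0 {n' : ℕ} (hn' : 0 < n') (f : (Fin n' → Bool) → ℂ)
    (hval : ∀ w, f w = 1 / 2 ∨ f w = -(1 / 2))
    (hbal : {w | f w = 1 / 2}.ncard = 2 ^ (n' - 1)) :
    ∑ w : Fin n' → Bool, f w = 0 := by
  classical
  have hcard : (Finset.univ.filter fun w : Fin n' → Bool => f w = 1 / 2).card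
      = 2 ^ (n' - 1) := by
    rw [← hbal, Set.ncard_eq_toFinset_card']
    congr 1
    ext w
    simp
  have htot : (Finset.univ : Finset (Fin n' → Bool)).card = 2 ^ n' := by
    simp [Finset.card_univ]
  have hpow : 2 ^ n' = 2 ^ (n' - 1) + 2 ^ (n' - 1) := by
    have h1 : n' - 1 + 1 = n' := Nat.succ_pred_eq_of_pos hn'
    calc 2 ^ n' = 2 ^ (n' - 1 + 1) := by rw [h1]
    _ = 2 ^ (n' - 1) + 2 ^ (n' - 1) := by rw [pow_succ]; ring
  have hcard2 : (Finset.univ.filter fun w : Fin n' → Bool => ¬ f w = 1 / 2).card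
      = 2 ^ (n' - 1) := by
    have h := Finset.card_filter_add_card_filter_not
      (s := (Finset.univ : Finset (Fin n' → Bool))) (fun w => f w = 1 / 2)
    omega
  rw [← Finset.sum_filter_add_sum_filter_not Finset.univ (fun w => f w = 1 / 2)]
  have e1 : ∑ w ∈ Finset.univ.filter (fun w : Fin n' → Bool => f w = 1 / 2), f w
      = (2 : ℂ) ^ (n' - 1) * (1 / 2) := by
    rw [Finset.sum_congr rfl (fun w hw => (Finset.mem_filter.mp hw).2),
      Finset.sum_const, hcard]
    push_cast
    ring
  have e2 : ∑ w ∈ Finset.univ.filter (fun w : Fin n' → Bool => ¬ f w = 1 / 2), f w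
      = (2 : ℂ) ^ (n' - 1) * (-(1 / 2)) := by
    rw [Finset.sum_congr rfl (fun w hw =>
        (hval w).resolve_left (Finset.mem_filter.mp hw).2),
      Finset.sum_const, hcard2]
    push_cast
    ring
  rw [e1, e2]
  ring

lemma fdiffsum {n' : ℕ} (f : (Fin n' → Bool) → ℂ)
    (hval : ∀ w, f w = 1 / 2 ∨ f w = -(1 / 2)) (g : (Fin n' → Bool) → (Fin n' → Bool)) :
    ∑ w : Fin n' → Bool, Complex.normSq (f w - f (g w))
      = (({w | f w ≠ f (g w)}.ncard : ℝ)) := by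
  classical
  have hncard : ({w | f w ≠ f (g w)}.ncard : ℝ)
      = ((Finset.univ.filter fun w : Fin n' → Bool => f w ≠ f (g w)).card : ℝ) := by
    congr 1
    rw [Set.ncard_eq_toFinset_card']
    congr 1
    ext w
    simp
  rw [hncard, Finset.card_filter]
  push_cast
  refine Finset.sum_congr rfl fun w _ => ?_
  by_cases h : f w = f (g w)
  · simp [h]
  · rcases hval w with h1 | h1 <;> rcases hval (g w) with h2 | h2 <;>
      rw [h1, h2] <;> rw [h1, h2] at h <;> simp_all <;>
      norm_num [Complex.normSq_apply]

lemma keySum {n' : ℕ} (hn' : 0 < n') (f : (Fin n' → Bool) → ℂ)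
    (hval : ∀ w, f w = 1 / 2 ∨ f w = -(1 / 2))
    (hbal : {w | f w = 1 / 2}.ncard = 2 ^ (n' - 1)) (a c : ℂ) :
    ∑ w : Fin n' → Bool, Complex.normSq (a + f w * c)
      = 2 ^ n' * Complex.normSq a + 2 ^ n' / 4 * Complex.normSq c := by
  have h1 : ∀ w, Complex.normSq (a + f w * c)
      = (Complex.normSq a + 1 / 4 * Complex.normSq c)
        + 2 * ((a * (starRingEnd ℂ) c) * f w).re := by
    intro w
    rw [Complex.normSq_add, Complex.normSq_mul, fnormSq f hval w]
    have h : a * (starRingEnd ℂ) (f w * c) = a * (starRingEnd ℂ) c * f w := by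
      rw [map_mul, fconj f hval w]; ring
    rw [h]
  rw [Finset.sum_congr rfl (fun w _ => h1 w), Finset.sum_add_distrib, Finset.sum_const]
  have h2 : ∑ w : Fin n' → Bool, 2 * ((a * (starRingEnd ℂ) c) * f w).re = 0 := by
    rw [← Finset.mul_sum, ← Complex.re_sum, ← Finset.mul_sum, fsum0 hn' f hval hbal]
    simp
  rw [h2, add_zero]
  have hcardf : (Finset.univ : Finset (Fin n' → Bool)).card = 2 ^ n' := by simp
  rw [hcardf, nsmul_eq_mul]
  push_cast
  ring


/-- if each coordinate of `f` has influence at most `s`, then every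
`φ` in `W = span{f_z}` satisfies `2^{n-1} I(φ) ≤ 2s ⟨φ,φ⟩`, i.e. the bound holds
for every coordinate `i = (k,b,j)` of `{0,1}^n`, `n = 2Bn'`. -/
theorem stmt6 {B n' : ℕ} (hn' : 0 < n')
    (f : (Fin n' → Bool) → ℂ)
    (hval : ∀ w, f w = 1 / 2 ∨ f w = -(1 / 2))
    (hbal : {w | f w = 1 / 2}.ncard = 2 ^ (n' - 1))
    (s : ℝ)
    (hs : ∀ j : Fin n', (({w | f w ≠ f (wflip j w)}.ncard : ℝ)) / 2 ^ n' ≤ s) :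
    ∀ φ ∈ Submodule.span ℂ (Set.range (fz f)),
      ∀ (k : Fin B) (b : Bool) (j : Fin n'),
        2 ^ (2 * B * n' - 1) * inflB k b j φ ≤
          2 * s * ∑ x : Blk B n', ‖φ x‖ ^ 2 := by
  classical
  intro φ hφ k b j
  obtain ⟨A, C, hA, hC, hd⟩ := decomp f k b φ hφ
  have hA' : ∀ (w) (r : {p : Fin B × Bool // p ≠ (k, b)} → (Fin n' → Bool)),
      A ((eKB k b).symm (w, r)) = A ((eKB k b).symm (fun _ => false, r)) := by
    intro w r
    rw [← eKB_ins k b (fun _ => false) w r, hA]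
  have hC' : ∀ (w) (r : {p : Fin B × Bool // p ≠ (k, b)} → (Fin n' → Bool)),
      C ((eKB k b).symm (w, r)) = C ((eKB k b).symm (fun _ => false, r)) := by
    intro w r
    rw [← eKB_ins k b (fun _ => false) w r, hC]
  set A' : ({p : Fin B × Bool // p ≠ (k, b)} → (Fin n' → Bool)) → ℂ :=
    fun r => A ((eKB k b).symm (fun _ => false, r)) with hA'def
  set C' : ({p : Fin B × Bool // p ≠ (k, b)} → (Fin n' → Bool)) → ℂ :=
    fun r => C ((eKB k b).symm (fun _ => false, r)) with hC'def
  have hφval : ∀ (w) (r : {p : Fin B × Bool // p ≠ (k, b)} → (Fin n' → Bool)),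
      φ ((eKB k b).symm (w, r)) = A' r + f w * C' r := by
    intro w r
    rw [hd, eKB_kb, hA', hC']
  have hflip : ∀ (w) (r : {p : Fin B × Bool // p ≠ (k, b)} → (Fin n' → Bool)),
      blkflip k b j ((eKB k b).symm (w, r)) = (eKB k b).symm (wflip j w, r) := by
    intro w r
    rw [blkflip_eq_insKB, eKB_kb, eKB_ins]
  have hS1 : ∑ x : Blk B n', Complex.normSq (φ x - φ (blkflip k b j x))
      = (∑ w : Fin n' → Bool, Complex.normSq (f w - f (wflip j w)))
        * ∑ r : {p : Fin B × Bool // p ≠ (k, b)} → (Fin n' → Bool),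
            Complex.normSq (C' r) := by
    rw [← Equiv.sum_comp (eKB (B := B) (n' := n') k b).symm
      (fun x => Complex.normSq (φ x - φ (blkflip k b j x))), Fintype.sum_prod_type,
      Finset.sum_mul]
    refine Finset.sum_congr rfl fun w _ => ?_
    rw [Finset.mul_sum]
    refine Finset.sum_congr rfl fun r _ => ?_
    rw [hflip, hφval, hφval,
      show (A' r + f w * C' r) - (A' r + f (wflip j w) * C' r)
        = (f w - f (wflip j w)) * C' r by ring, Complex.normSq_mul]
  have hS2 : ∑ x : Blk B n', Complex.normSq (φ x)
      = 2 ^ n' * (∑ r : {p : Fin B × Bool // p ≠ (k, b)} → (Fin n' → Bool),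
            Complex.normSq (A' r))
        + 2 ^ n' / 4 * ∑ r : {p : Fin B × Bool // p ≠ (k, b)} → (Fin n' → Bool),
            Complex.normSq (C' r) := by
    rw [← Equiv.sum_comp (eKB (B := B) (n' := n') k b).symm
      (fun x => Complex.normSq (φ x)), Fintype.sum_prod_type, Finset.sum_comm,
      Finset.mul_sum, Finset.mul_sum, ← Finset.sum_add_distrib]
    refine Finset.sum_congr rfl fun r _ => ?_
    rw [← keySum hn' f hval hbal (A' r) (C' r)]
    exact Finset.sum_congr rfl fun w _ => by rw [hφval]
  -- abbreviations
  set SA := ∑ r : {p : Fin B × Bool // p ≠ (k, b)} → (Fin n' → Bool),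
      Complex.normSq (A' r) with hSAdef
  set SC := ∑ r : {p : Fin B × Bool // p ≠ (k, b)} → (Fin n' → Bool),
      Complex.normSq (C' r) with hSCdef
  set Nj := ∑ w : Fin n' → Bool, Complex.normSq (f w - f (wflip j w)) with hNjdef
  have hSAnn : 0 ≤ SA := Finset.sum_nonneg fun r _ => Complex.normSq_nonneg _
  have hSCnn : 0 ≤ SC := Finset.sum_nonneg fun r _ => Complex.normSq_nonneg _
  have hNjnn : 0 ≤ Nj := Finset.sum_nonneg fun w _ => Complex.normSq_nonneg _
  have hQ : (0 : ℝ) < 2 ^ n' := by positivity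
  have hNle : Nj ≤ s * 2 ^ n' := by
    have h1 : Nj = (({w | f w ≠ f (wflip j w)}.ncard : ℝ)) := by
      rw [hNjdef, fdiffsum f hval (wflip j)]
    have h2 := hs j
    rw [div_le_iff₀ hQ] at h2
    rw [h1]
    exact h2
  have hs0 : 0 ≤ s := le_trans (div_nonneg (Nat.cast_nonneg _) hQ.le) (hs j)
  -- rewrite the goal
  simp only [inflB, Complex.sq_norm]
  rw [hS1, hS2]
  have h1 : 1 ≤ 2 * B * n' := Nat.one_le_of_lt (by
    have := k.pos
    nlinarith [hn', k.pos])
  have hpow : (2 : ℝ) ^ (2 * B * n') = 2 * 2 ^ (2 * B * n' - 1) := by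
    calc (2 : ℝ) ^ (2 * B * n') = 2 ^ (2 * B * n' - 1 + 1) := by
          rw [Nat.sub_add_cancel h1]
      _ = 2 * 2 ^ (2 * B * n' - 1) := by rw [pow_succ]; ring
  have hP : (0 : ℝ) < 2 ^ (2 * B * n' - 1) := by positivity
  rw [hpow]
  have hlhs : (2 : ℝ) ^ (2 * B * n' - 1) * (Nj * SC / (2 * 2 ^ (2 * B * n' - 1)))
      = Nj * SC / 2 := by
    field_simp
  rw [hlhs]
  nlinarith [mul_le_mul_of_nonneg_right hNle hSCnn,
    mul_nonneg (mul_nonneg hs0 hQ.le) hSAnn]
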